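/- If S is an upper triangular (k+1)×(k+1) matrix and B is a tridiagonal (k+1)×(k+1) matrix (with possibly nonzero sub-, main-, and super-diagonal), then the (k,0) entry of the product (B S)^k equals (∏_{j=1}^{k} B_{j,j-1}) · (∏_{j=0}^{k-1} S_{j,j}). -/
import Mathlib

lemma aux_pow_zero {n : ℕ} {R : Type*} [CommRing R] (M : Matrix (Fin n) (Fin n) R)
    (h : ∀ i j : Fin n, (j : ℕ) + 1 < (i : ℕ) → M i j = 0) :
    ∀ m : ℕ, ∀ i j : Fin n, (j : ℕ) + m < (i : ℕ) → (M ^ m) i j = 0 := by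
  intro m
  induction m with
  | zero =>
    intro i j hij
    simp only [pow_zero, Matrix.one_apply]
    rw [if_neg]
    intro e; subst e; omega
  | succ m ih =>
    intro i j hij
    rw [pow_succ, Matrix.mul_apply]
    apply Finset.sum_eq_zero
    intro l _
    by_cases hl : (l : ℕ) + m < (i : ℕ)
    · rw [ih i l hl, zero_mul]
    · rw [h l j (by omega), mul_zero]

lemma aux_pow_entry {n : ℕ} {R : Type*} [CommRing R] (M : Matrix (Fin n) (Fin n) R)
    (h : ∀ i j : Fin n, (j : ℕ) + 1 < (i : ℕ) → M i j = 0) :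
    ∀ m : ℕ, ∀ i j : Fin n, (hij : (i : ℕ) = (j : ℕ) + m) →
      (M ^ m) i j = ∏ t : Fin m, M ⟨(j : ℕ) + t + 1, by omega⟩ ⟨(j : ℕ) + t, by omega⟩ := by
  intro m
  induction m with
  | zero =>
    intro i j hij
    have : i = j := Fin.ext (by omega)
    subst this
    simp [Matrix.one_apply]
  | succ m ih =>
    intro i j hij
    have hj1 : (j : ℕ) + 1 < n := by omega
    rw [pow_succ, Matrix.mul_apply]
    rw [Finset.sum_eq_single (⟨(j : ℕ) + 1, hj1⟩ : Fin n)]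
    · rw [ih i ⟨(j : ℕ) + 1, hj1⟩ (by simp; omega)]
      rw [Fin.prod_univ_succ, mul_comm]
      congr 1
      · apply Finset.prod_congr rfl
        intro t _
        congr 1 <;> · apply Fin.ext; simp; omega
    · intro l _ hl
      by_cases hc : (l : ℕ) + m < (i : ℕ)
      · rw [aux_pow_zero M h m i l hc, zero_mul]
      · have : (j : ℕ) + 1 < (l : ℕ) := by
          rcases Nat.lt_or_ge ((j:ℕ)+1) (l:ℕ) with h1 | h1
          · exact h1
          · exfalso; apply hl; apply Fin.ext; simp; omega
        rw [h l j this, mul_zero]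
    · intro hmem; exact absurd (Finset.mem_univ _) hmem

/-- If `S` is upper triangular and `B` is tridiagonal ((k+1)×(k+1) over a commutative
ring), then the `(k,0)` entry of `(B S)^k` equals
`(∏_{j=1}^{k} B_{j,j-1}) · (∏_{j=0}^{k-1} S_{j,j})`. -/
theorem entry_k0_of_pow (k : ℕ) (hk : 1 ≤ k) (R : Type*) [CommRing R]
    (B S : Matrix (Fin (k + 1)) (Fin (k + 1)) R)
    (hB : ∀ i j : Fin (k + 1), ((i : ℕ) + 1 < (j : ℕ) ∨ (j : ℕ) + 1 < (i : ℕ)) → B i j = 0)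
    (hS : ∀ i j : Fin (k + 1), (j : ℕ) < (i : ℕ) → S i j = 0) :
    ((B * S) ^ k) (Fin.last k) 0 =
      (∏ j : Fin k, B j.succ j.castSucc) * (∏ j : Fin k, S j.castSucc j.castSucc) := by
  set M := B * S with hM
  have hMz : ∀ i j : Fin (k + 1), (j : ℕ) + 1 < (i : ℕ) → M i j = 0 := by
    intro i j hij
    rw [hM, Matrix.mul_apply]
    apply Finset.sum_eq_zero
    intro l _
    by_cases hl : (l : ℕ) + 1 < (i : ℕ)
    · rw [hB i l (Or.inr hl), zero_mul]
    · rw [hS l j (by omega), mul_zero]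
  have hsub : ∀ (a : ℕ) (h1 : a + 1 < k + 1) (h0 : a < k + 1),
      M ⟨a + 1, h1⟩ ⟨a, h0⟩ = B ⟨a + 1, h1⟩ ⟨a, h0⟩ * S ⟨a, h0⟩ ⟨a, h0⟩ := by
    intro a h1 h0
    rw [hM, Matrix.mul_apply]
    rw [Finset.sum_eq_single (⟨a, h0⟩ : Fin (k + 1))]
    · intro l _ hl
      by_cases hc : (l : ℕ) < a
      · rw [hB _ l (by simp; omega), zero_mul]
      · have : a < (l : ℕ) := by
          rcases Nat.lt_or_ge a (l:ℕ) with h2 | h2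
          · exact h2
          · exfalso; apply hl; apply Fin.ext; simp; omega
        rw [hS l _ (by simpa using this), mul_zero]
    · intro hmem; exact absurd (Finset.mem_univ _) hmem
  have h0 : ((Fin.last k : Fin (k + 1)) : ℕ) = ((0 : Fin (k + 1)) : ℕ) + k := by simp
  rw [aux_pow_entry M hMz k (Fin.last k) 0 h0]
  have : ∀ t : Fin k,
      M ⟨((0 : Fin (k+1)) : ℕ) + t + 1, by omega⟩ ⟨((0 : Fin (k+1)) : ℕ) + t, by omega⟩
        = B t.succ t.castSucc * S t.castSucc t.castSucc := by
    intro t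
    have ht1 : (t : ℕ) + 1 < k + 1 := by omega
    have ht0 : (t : ℕ) < k + 1 := by omega
    have e1 : (⟨((0 : Fin (k+1)) : ℕ) + t + 1, by omega⟩ : Fin (k+1)) = ⟨(t : ℕ) + 1, ht1⟩ := by
      apply Fin.ext; simp
    have e2 : (⟨((0 : Fin (k+1)) : ℕ) + t, by omega⟩ : Fin (k+1)) = ⟨(t : ℕ), ht0⟩ := by
      apply Fin.ext; simp
    rw [e1, e2, hsub (t : ℕ) ht1 ht0]
    congr 1
  rw [Finset.prod_congr rfl (fun t _ => this t), Finset.prod_mul_distrib]
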